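/- arXiv:2208.14732 — 2 statements merged into one kernel-verified Lean document; each statement's English description precedes it below -/
import Mathlib

section
/- Let 1 < p < ∞, let Ω ⊂ X be a bounded open set and F ⊂ Ω closed. Then the variational p-capacity satisfies cap_p(F,Ω) ≤ 4^p cap_{1,p}(F,Ω), where cap_{1,p} is the Hajłasz (1,p)-capacity. The key step: if u is Lipschitz and g is a Hajłasz 1-gradient of u (valid for all points after redefining g on a null set), then 4g is a p-weak upper gradient of u. -/
open MeasureTheory Metric Set ENNReal NNReal

/-- `u` is `β`-Hölder with constant `κ`. -/
def IsHolderWith {X : Type*} [MetricSpace X] (κ β : ℝ) (u : X → ℝ) : Prop :=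
  ∀ x y, |u x - u y| ≤ κ * dist x y ^ β

/-- `g` is a Hajłasz `β`-gradient of `u`. -/
def IsHajlaszGradient {X : Type*} [MetricSpace X] [MeasurableSpace X]
    (μ : Measure X) (β : ℝ) (u : X → ℝ) (g : X → ℝ≥0∞) : Prop :=
  Measurable g ∧ ∃ N : Set X, μ N = 0 ∧ ∀ x ∉ N, ∀ y ∉ N,
    ENNReal.ofReal |u x - u y| ≤ ENNReal.ofReal (dist x y ^ β) * (g x + g y)

/-- The variational Hajłasz `(β,p)`-capacity of `F` relative to `Ω`. -/
noncomputable def hajlaszCapacity {X : Type*} [MetricSpace X] [MeasurableSpace X]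
    (μ : Measure X) (β p : ℝ) (F Ω : Set X) : ℝ≥0∞ :=
  sInf { t | ∃ u : X → ℝ, (∃ κ : ℝ, IsHolderWith κ β u) ∧
    (∀ x ∈ F, 1 ≤ u x) ∧ (∀ x ∉ Ω, u x = 0) ∧
    ∃ g : X → ℝ≥0∞, IsHajlaszGradient μ β u g ∧ t = ∫⁻ x, g x ^ p ∂μ }

/-- The Riesz kernel of order `β`: `d(x,y)^β / μ(B(x,d(x,y)))`. -/
noncomputable def rieszKernel {X : Type*} [MetricSpace X] [MeasurableSpace X]
    (μ : Measure X) (β : ℝ) (x y : X) : ℝ≥0∞ :=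
  ENNReal.ofReal (dist x y ^ β) / μ (ball x (dist x y))

/-- The Riesz potential of order `β`. -/
noncomputable def rieszPotential {X : Type*} [MetricSpace X] [MeasurableSpace X]
    (μ : Measure X) (β : ℝ) (f : X → ℝ≥0∞) (x : X) : ℝ≥0∞ :=
  ∫⁻ y, f y * rieszKernel μ β x y ∂μ

/-- The Riesz `(β,p)`-capacity of `F`. -/
noncomputable def rieszCapacity {X : Type*} [MetricSpace X] [MeasurableSpace X]
    (μ : Measure X) (β p : ℝ) (F : Set X) : ℝ≥0∞ :=
  sInf { t | ∃ f : X → ℝ≥0∞, Measurable f ∧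
    (∀ x ∈ F, 1 ≤ rieszPotential μ β f x) ∧ t = ∫⁻ x, f x ^ p ∂μ }

/-- The integral of `g` along a curve `γ` parametrized by arc length on `[0, L]`. -/
noncomputable def curveLintegral {X : Type*} (g : X → ℝ≥0∞) (γ : ℝ → X) (L : ℝ) : ℝ≥0∞ :=
  ∫⁻ t in Set.Icc 0 L, g (γ t)

/-- `g` is a `p`-weak upper gradient of `u`: the upper gradient inequality holds
along every nonconstant `1`-Lipschitz (arc-length parametrized) curve except for a
family of curves on which some fixed nonnegative Borel function `ρ ∈ L^p_loc`
has infinite line integral. -/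
def IsPWeakUpperGradient {X : Type*} [MetricSpace X] [MeasurableSpace X]
    (μ : Measure X) (p : ℝ) (u : X → ℝ) (g : X → ℝ≥0∞) : Prop :=
  Measurable g ∧ ∃ ρ : X → ℝ≥0∞, Measurable ρ ∧
    (∀ x : X, ∃ r : ℝ, 0 < r ∧ ∫⁻ y in ball x r, ρ y ^ p ∂μ < ∞) ∧
    ∀ (γ : ℝ → X) (L : ℝ), 0 < L → LipschitzWith 1 γ →
      curveLintegral ρ γ L ≠ ∞ →
      ENNReal.ofReal |u (γ 0) - u (γ L)| ≤ curveLintegral g γ L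

/-- The variational `p`-capacity of `F` relative to `Ω`. -/
noncomputable def pCapacity {X : Type*} [MetricSpace X] [MeasurableSpace X]
    (μ : Measure X) (p : ℝ) (F Ω : Set X) : ℝ≥0∞ :=
  sInf { t | ∃ u : X → ℝ, (∃ K : ℝ≥0, LipschitzWith K u) ∧
    (∀ x ∈ F, 1 ≤ u x) ∧ (∀ x ∉ Ω, u x = 0) ∧
    ∃ g : X → ℝ≥0∞, IsPWeakUpperGradient μ p u g ∧ t = ∫⁻ x in Ω, g x ^ p ∂μ }


lemma exists_pt_le_avg (h : ℝ → ℝ≥0∞) (hhm : Measurable h) (a b : ℝ) (hab : a < b)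
    (hfin : ∫⁻ s in Set.Icc a b, h s ≠ ⊤) :
    ∃ t ∈ Set.Icc a b, h t * ENNReal.ofReal (b - a) ≤ ∫⁻ s in Set.Icc a b, h s := by
  by_contra hcon
  push_neg at hcon
  set S := ∫⁻ s in Set.Icc a b, h s with hS
  have hba : (0:ℝ) < b - a := by linarith
  have hne : ENNReal.ofReal (b - a) ≠ 0 := by simp [hab]
  have hnt : ENNReal.ofReal (b - a) ≠ ⊤ := ofReal_ne_top
  have key : ∀ t ∈ Set.Icc a b, S / ENNReal.ofReal (b - a) < h t := by
    intro t ht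
    exact (ENNReal.div_lt_iff (Or.inl hne) (Or.inl hnt)).mpr (hcon t ht)
  have hμs : (volume : Measure ℝ) (Set.Icc a b) ≠ 0 := by
    rw [Real.volume_Icc]; simp [hab]
  have hfi : ∫⁻ _ in Set.Icc a b, S / ENNReal.ofReal (b - a) ∂(volume) ≠ ⊤ := by
    rw [setLIntegral_const]
    exact ENNReal.mul_ne_top (by simp [ENNReal.div_eq_top, hfin, hne]) (by
      rw [Real.volume_Icc]; exact ofReal_ne_top)
  have hstrict := setLIntegral_strict_mono (measurableSet_Icc) hμs hhm hfi
    (Filter.Eventually.of_forall key)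
  rw [setLIntegral_const, Real.volume_Icc] at hstrict
  rw [ENNReal.div_mul_cancel hne hnt] at hstrict
  exact lt_irrefl _ hstrict

lemma hajlasz_weak_ug {X : Type*} [MetricSpace X] [MeasurableSpace X] [BorelSpace X]
    (μ : Measure X) (p : ℝ) (hp : 0 < p)
    (u : X → ℝ) (K : ℝ≥0) (g : X → ℝ≥0∞) (hu : LipschitzWith K u) (hg : Measurable g)
    (hH : ∀ x y : X, ENNReal.ofReal |u x - u y| ≤ ENNReal.ofReal (dist x y) * (g x + g y)) :
    IsPWeakUpperGradient μ p u (fun x => 4 * g x) := by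
  refine ⟨measurable_const.mul hg, 0, measurable_const, fun x => ⟨1, one_pos, by
    simp [ENNReal.zero_rpow_of_pos hp]⟩, ?_⟩
  intro γ L hL hγ _
  set h : ℝ → ℝ≥0∞ := fun s => g (γ s) with hh
  have hhm : Measurable h := hg.comp hγ.continuous.measurable
  set I := ∫⁻ s in Set.Icc 0 L, h s with hI
  have hcurve : curveLintegral (fun x => 4 * g x) γ L = 4 * I := by
    rw [hI, curveLintegral, ← lintegral_const_mul 4 hhm]
  rw [hcurve]
  rcases eq_or_ne I ⊤ with hIt | hIfin
  · rw [hIt]; simp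
  -- main claim
  have main : ∀ n : ℕ, 0 < n →
      ENNReal.ofReal |u (γ 0) - u (γ L)| ≤ 4 * I + ENNReal.ofReal (2 * K * L / n) := by
    intro n hn
    obtain ⟨m, rfl⟩ : ∃ m : ℕ, n = m + 1 := ⟨n - 1, (Nat.succ_pred_eq_of_pos hn).symm⟩
    push_cast
    set a : ℕ → ℝ := fun i => i * L / ((m:ℝ)+1) with hadef
    have hstep : ∀ i : ℕ, a (i+1) - a i = L / ((m:ℝ)+1) := by
      intro i; simp only [hadef]; push_cast; ring
    have hLn : (0:ℝ) < L / ((m:ℝ)+1) := by positivity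
    have hlt' : ∀ i : ℕ, a i < a (i+1) := by intro i; have := hstep i; linarith
    have hmono : Monotone a := monotone_nat_of_le_succ fun i => (hlt' i).le
    have ha0 : a 0 = 0 := by simp [hadef]
    have han : a (m+1) = L := by
      simp only [hadef]; push_cast; field_simp
    have hsub : ∀ i : ℕ, i < m+1 → Set.Icc (a i) (a (i+1)) ⊆ Set.Icc 0 L := by
      intro i hi
      apply Set.Icc_subset_Icc
      · rw [← ha0]; exact hmono (Nat.zero_le i)
      · rw [← han]; exact hmono hi
    have hfin' : ∀ i : ℕ, i < m+1 → ∫⁻ s in Set.Icc (a i) (a (i+1)), h s ≠ ⊤ := by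
      intro i hi
      exact ne_top_of_le_ne_top hIfin (lintegral_mono_set (hsub i hi))
    have hpt : ∀ i : ℕ, ∃ t', i < m+1 → t' ∈ Set.Icc (a i) (a (i+1)) ∧
        h t' * ENNReal.ofReal (L / ((m:ℝ)+1)) ≤ ∫⁻ s in Set.Icc (a i) (a (i+1)), h s := by
      intro i
      by_cases hi : i < m+1
      · obtain ⟨t', ht1, ht2⟩ := exists_pt_le_avg h hhm (a i) (a (i+1)) (hlt' i) (hfin' i hi)
        rw [hstep i] at ht2
        exact ⟨t', fun _ => ⟨ht1, ht2⟩⟩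
      · exact ⟨0, fun h' => absurd h' hi⟩
    choose t ht using hpt
    set f : ℕ → ℝ := fun i => if i = 0 then 0 else if i ≤ m+1 then t (i-1) else L with hfdef
    have hf0 : f 0 = 0 := by simp [hfdef]
    have hflast : f (m+2) = L := by simp [hfdef]
    have hfmid : ∀ i : ℕ, 1 ≤ i → i ≤ m+1 → f i = t (i-1) := by
      intro i h1 h2
      simp [hfdef, Nat.one_le_iff_ne_zero.mp h1, h2]
    have tel : dist (u (γ 0)) (u (γ L)) ≤
        ∑ i ∈ Finset.range (m+2), dist (u (γ (f i))) (u (γ (f (i+1)))) := by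
      simpa [hf0, hflast] using dist_le_range_sum_dist (fun i => u (γ (f i))) (m+2)
    set D : ℕ → ℝ≥0∞ := fun i => ENNReal.ofReal (dist (u (γ (f i))) (u (γ (f (i+1))))) with hDdef
    have step1 : ENNReal.ofReal |u (γ 0) - u (γ L)| ≤ ∑ i ∈ Finset.range (m+2), D i := by
      rw [hDdef, ← ENNReal.ofReal_sum_of_nonneg (fun i _ => dist_nonneg)]
      rw [show |u (γ 0) - u (γ L)| = dist (u (γ 0)) (u (γ L)) from (Real.dist_eq _ _).symm]
      exact ENNReal.ofReal_le_ofReal tel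
    have hsplit : ∑ i ∈ Finset.range (m+2), D i
        = D 0 + (∑ i ∈ Finset.range m, D (i+1) + D (m+1)) := by
      rw [Finset.sum_range_succ' D (m+1), Finset.sum_range_succ (fun i => D (i+1)) m]
      ring
    have ht0 := (ht 0 (Nat.succ_pos m)).1
    have htm := (ht m (by omega)).1
    have ha1 : a 1 = L / ((m:ℝ)+1) := by
      have := hstep 0; rw [ha0] at this; linarith
    have hD0 : D 0 ≤ ENNReal.ofReal ((K:ℝ) * (L / ((m:ℝ)+1))) := by
      have hf1 : f 1 = t 0 := hfmid 1 le_rfl (by omega)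
      refine ENNReal.ofReal_le_ofReal ?_
      rw [hf0, hf1]
      have h3 := ht0
      rw [ha0, ha1] at h3
      have h2 : dist (γ 0) (γ (t 0)) ≤ L / ((m:ℝ)+1) := by
        refine le_trans (hγ.dist_le_mul _ _) ?_
        rw [NNReal.coe_one, one_mul, Real.dist_eq, abs_sub_comm, sub_zero, abs_of_nonneg h3.1]
        exact h3.2
      calc dist (u (γ 0)) (u (γ (t 0))) ≤ K * dist (γ 0) (γ (t 0)) := hu.dist_le_mul _ _
        _ ≤ (K:ℝ) * (L / ((m:ℝ)+1)) := mul_le_mul_of_nonneg_left h2 K.coe_nonneg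
    have hDn : D (m+1) ≤ ENNReal.ofReal ((K:ℝ) * (L / ((m:ℝ)+1))) := by
      have hfn : f (m+1) = t m := by simpa using hfmid (m+1) (by omega) le_rfl
      refine ENNReal.ofReal_le_ofReal ?_
      rw [hfn, hflast]
      have h6 : L - a m = L / ((m:ℝ)+1) := by
        have := hstep m; rw [han] at this; linarith
      have h2 : dist (γ (t m)) (γ L) ≤ L / ((m:ℝ)+1) := by
        refine le_trans (hγ.dist_le_mul _ _) ?_
        rw [NNReal.coe_one, one_mul, Real.dist_eq]
        have h4 : t m ≤ L := han ▸ htm.2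
        have h5 : a m ≤ t m := htm.1
        rw [abs_of_nonpos (by linarith : t m - L ≤ 0)]
        linarith
      calc dist (u (γ (t m))) (u (γ L)) ≤ K * dist (γ (t m)) (γ L) := hu.dist_le_mul _ _
        _ ≤ (K:ℝ) * (L / ((m:ℝ)+1)) := mul_le_mul_of_nonneg_left h2 K.coe_nonneg
    have hDmid : ∀ i ∈ Finset.range m, D (i+1) ≤
        ENNReal.ofReal (2 * (L / ((m:ℝ)+1))) * (h (t i) + h (t (i+1))) := by
      intro i hi
      have him : i < m := Finset.mem_range.mp hi
      have hf1 : f (i+1) = t i := by simpa using hfmid (i+1) (by omega) (by omega)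
      have hf2 : f (i+2) = t (i+1) := by simpa using hfmid (i+2) (by omega) (by omega)
      have hti := (ht i (by omega)).1
      have hti1 := (ht (i+1) (by omega)).1
      have hdistt : dist (γ (t i)) (γ (t (i+1))) ≤ 2 * (L / ((m:ℝ)+1)) := by
        refine le_trans (hγ.dist_le_mul _ _) ?_
        rw [NNReal.coe_one, one_mul, Real.dist_eq]
        have h1 := hti.1; have h2 := hti.2
        have h3 := hti1.1; have h4 := hti1.2
        have e1 := hstep i; have e2 := hstep (i+1)
        rw [abs_le]
        constructor <;> linarith
      calc D (i+1) = ENNReal.ofReal |u (γ (t i)) - u (γ (t (i+1)))| := by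
            rw [hDdef]
            show ENNReal.ofReal (dist (u (γ (f (i+1)))) (u (γ (f (i+1+1))))) = _
            rw [hf1, show i+1+1 = i+2 from rfl, hf2, Real.dist_eq]
        _ ≤ ENNReal.ofReal (dist (γ (t i)) (γ (t (i+1)))) * (g (γ (t i)) + g (γ (t (i+1)))) :=
            hH _ _
        _ ≤ ENNReal.ofReal (2 * (L / ((m:ℝ)+1))) * (h (t i) + h (t (i+1))) :=
            mul_le_mul_left (ENNReal.ofReal_le_ofReal hdistt) _
    have hsum_nu : ∑ i ∈ Finset.range (m+1), (∫⁻ s in Set.Icc (a i) (a (i+1)), h s) ≤ I := by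
      have hap : ∀ i : ℕ, (∫⁻ s in Set.Icc (a i) (a (i+1)), h s)
          = (volume.withDensity h) (Set.Icc (a i) (a (i+1))) :=
        fun i => (withDensity_apply h measurableSet_Icc).symm
      have hico : ∀ i : ℕ, (volume.withDensity h) (Set.Icc (a i) (a (i+1)))
          ≤ (volume.withDensity h) (Set.Ico (a i) (a (i+1))) := by
        intro i
        rw [← Set.Ico_union_right (hlt' i).le]
        refine le_trans (measure_union_le _ _) ?_
        have hz : (volume.withDensity h) {a (i+1)} = 0 :=
          withDensity_absolutelyContinuous volume h Real.volume_singleton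
        simp [hz]
      have hdisj : (↑(Finset.range (m+1)) : Set ℕ).PairwiseDisjoint
          (fun i => Set.Ico (a i) (a (i+1))) := by
        intro i _ j _ hij
        rcases lt_or_gt_of_ne hij with hlt2 | hlt2
        · exact Set.Ico_disjoint_Ico.mpr
            (le_trans (min_le_left _ _) (le_trans (hmono hlt2) (le_max_right _ _)))
        · exact Set.Ico_disjoint_Ico.mpr
            (le_trans (min_le_right _ _) (le_trans (hmono hlt2) (le_max_left _ _)))
      calc ∑ i ∈ Finset.range (m+1), (∫⁻ s in Set.Icc (a i) (a (i+1)), h s)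
          ≤ ∑ i ∈ Finset.range (m+1), (volume.withDensity h) (Set.Ico (a i) (a (i+1))) := by
            refine Finset.sum_le_sum fun i _ => ?_
            rw [hap i]; exact hico i
        _ = (volume.withDensity h) (⋃ i ∈ Finset.range (m+1), Set.Ico (a i) (a (i+1))) :=
            (measure_biUnion_finset hdisj fun i _ => measurableSet_Ico).symm
        _ ≤ (volume.withDensity h) (Set.Icc 0 L) := by
            refine measure_mono (Set.iUnion₂_subset fun i hi => ?_)
            exact Set.Subset.trans Set.Ico_subset_Icc_self (hsub i (Finset.mem_range.mp hi))
        _ = I := by rw [withDensity_apply h measurableSet_Icc, hI]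
    have hmid : ∑ i ∈ Finset.range m, D (i+1) ≤ 4 * I := by
      calc ∑ i ∈ Finset.range m, D (i+1)
          ≤ ∑ i ∈ Finset.range m,
              ENNReal.ofReal (2 * (L/((m:ℝ)+1))) * (h (t i) + h (t (i+1))) :=
            Finset.sum_le_sum hDmid
        _ = ENNReal.ofReal (2*(L/((m:ℝ)+1))) * (∑ i ∈ Finset.range m, h (t i)
              + ∑ i ∈ Finset.range m, h (t (i+1))) := by
            rw [← Finset.mul_sum, Finset.sum_add_distrib]
        _ ≤ ENNReal.ofReal (2*(L/((m:ℝ)+1))) * (∑ i ∈ Finset.range (m+1), h (t i)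
              + ∑ i ∈ Finset.range (m+1), h (t i)) := by
            refine mul_le_mul_right (add_le_add ?_ ?_) _
            · exact Finset.sum_le_sum_of_subset (Finset.range_subset_range.mpr (by omega))
            · rw [Finset.sum_range_succ' (fun i => h (t i)) m]
              exact self_le_add_right _ _
        _ = 4 * ∑ i ∈ Finset.range (m+1), (h (t i) * ENNReal.ofReal (L/((m:ℝ)+1))) := by
            rw [ENNReal.ofReal_mul (by norm_num : (0:ℝ) ≤ 2), ← Finset.sum_mul,
              ENNReal.ofReal_ofNat]
            ring
        _ ≤ 4 * ∑ i ∈ Finset.range (m+1), (∫⁻ s in Set.Icc (a i) (a (i+1)), h s) := by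
            refine mul_le_mul_right (Finset.sum_le_sum fun i hi => ?_) _
            exact (ht i (Finset.mem_range.mp hi)).2
        _ ≤ 4 * I := mul_le_mul_right hsum_nu _
    calc ENNReal.ofReal |u (γ 0) - u (γ L)| ≤ ∑ i ∈ Finset.range (m+2), D i := step1
      _ = D 0 + (∑ i ∈ Finset.range m, D (i+1) + D (m+1)) := hsplit
      _ ≤ ENNReal.ofReal ((K:ℝ) * (L/((m:ℝ)+1)))
          + (4 * I + ENNReal.ofReal ((K:ℝ) * (L/((m:ℝ)+1)))) :=
          add_le_add hD0 (add_le_add hmid hDn)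
      _ = 4 * I + (ENNReal.ofReal ((K:ℝ)*(L/((m:ℝ)+1)))
          + ENNReal.ofReal ((K:ℝ)*(L/((m:ℝ)+1)))) := by ring
      _ = 4 * I + ENNReal.ofReal (2 * (K:ℝ) * L / ((m:ℝ)+1)) := by
          rw [← ENNReal.ofReal_add (by positivity) (by positivity)]
          congr 1
          ring
  refine ENNReal.le_of_forall_pos_le_add fun ε hε hlt => ?_
  obtain ⟨n, hn⟩ := exists_nat_gt (max 1 (2 * K * L / ε))
  have hn1 : (1:ℝ) < n := lt_of_le_of_lt (le_max_left _ _) hn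
  have hn0 : 0 < n := by exact_mod_cast lt_trans one_pos hn1
  refine le_trans (main n hn0) (add_le_add_right ?_ _)
  have hεR : (0:ℝ) < ε := by exact_mod_cast hε
  have h2 : 2 * (K:ℝ) * L / n < ε := by
    rw [div_lt_iff₀ (by positivity)]
    have h3 := lt_of_le_of_lt (le_max_right 1 (2 * (K:ℝ) * L / ε)) hn
    rw [div_lt_iff₀ hεR] at h3
    linarith [h3]
  calc ENNReal.ofReal (2 * K * L / n) ≤ ENNReal.ofReal ε := ENNReal.ofReal_le_ofReal h2.le
    _ = (ε : ℝ≥0∞) := ENNReal.ofReal_coe_nnreal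

theorem stmt17 {X : Type*} [MetricSpace X] [MeasurableSpace X] [BorelSpace X]
    (μ : Measure X)
    (hpos : ∀ (x : X) (r : ℝ), 0 < r → 0 < μ (ball x r))
    (hfin : ∀ (x : X) (r : ℝ), μ (ball x r) < ∞)
    (c : ℝ≥0) (hc : 1 < c)
    (hdbl : ∀ (x : X) (r : ℝ), 0 < r → μ (ball x (2 * r)) ≤ (c : ℝ≥0∞) * μ (ball x r))
    (p : ℝ) (hp : 1 < p)
    (Ω F : Set X) (hΩo : IsOpen Ω) (hΩb : Bornology.IsBounded Ω)
    (hF : IsClosed F) (hFΩ : F ⊆ Ω) :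
    pCapacity μ p F Ω ≤ ENNReal.ofReal (4 ^ p) * hajlaszCapacity μ 1 p F Ω ∧
    ∀ (u : X → ℝ) (K : ℝ≥0) (g : X → ℝ≥0∞), LipschitzWith K u → Measurable g →
      (∀ x y : X, ENNReal.ofReal |u x - u y| ≤ ENNReal.ofReal (dist x y) * (g x + g y)) →
      IsPWeakUpperGradient μ p u (fun x => 4 * g x) := by

  have hp0 : 0 < p := lt_trans one_pos hp
  have hmain2 : ∀ (u : X → ℝ) (K : ℝ≥0) (g : X → ℝ≥0∞), LipschitzWith K u → Measurable g →
      (∀ x y : X, ENNReal.ofReal |u x - u y| ≤ ENNReal.ofReal (dist x y) * (g x + g y)) →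
      IsPWeakUpperGradient μ p u (fun x => 4 * g x) :=
    fun u K g hu hg hH => hajlasz_weak_ug μ p hp0 u K g hu hg hH
  refine ⟨?_, hmain2⟩
  have hc0 : ENNReal.ofReal (4 ^ p) ≠ 0 := by
    simp only [ne_eq, ENNReal.ofReal_eq_zero, not_le]
    positivity
  have hcT : ENNReal.ofReal (4 ^ p) ≠ ⊤ := ENNReal.ofReal_ne_top
  have main : ∀ τ ∈ { t | ∃ u : X → ℝ, (∃ κ : ℝ, IsHolderWith κ 1 u) ∧
      (∀ x ∈ F, 1 ≤ u x) ∧ (∀ x ∉ Ω, u x = 0) ∧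
      ∃ g : X → ℝ≥0∞, IsHajlaszGradient μ 1 u g ∧ t = ∫⁻ x, g x ^ p ∂μ },
      pCapacity μ p F Ω ≤ ENNReal.ofReal (4 ^ p) * τ := by
    rintro τ ⟨u, ⟨κ, hκ⟩, hu1, hu0, g, ⟨hgm, N, hN0, hNineq⟩, rfl⟩
    classical
    have huL : LipschitzWith κ.toNNReal u := LipschitzWith.of_dist_le_mul fun x y => by
      have h1 := hκ x y
      rw [Real.rpow_one] at h1
      calc dist (u x) (u y) = |u x - u y| := Real.dist_eq _ _
        _ ≤ κ * dist x y := h1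
        _ ≤ (κ.toNNReal : ℝ) * dist x y :=
            mul_le_mul_of_nonneg_right (Real.le_coe_toNNReal κ) dist_nonneg
    set N' := toMeasurable μ N with hN'def
    have hN'm : MeasurableSet N' := measurableSet_toMeasurable μ N
    have hN'0 : μ N' = 0 := by rw [hN'def, measure_toMeasurable]; exact hN0
    set g' : X → ℝ≥0∞ := fun x => if x ∈ N' then ⊤ else g x with hg'def
    have hg'm : Measurable g' := Measurable.ite hN'm measurable_const hgm
    have htop : ∀ x y : X, x ∈ N' → x ≠ y →
        ENNReal.ofReal |u x - u y| ≤ ENNReal.ofReal (dist x y) * (g' x + g' y) := by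
      intro x y hx hxy
      have hd : 0 < dist x y := dist_pos.mpr hxy
      have hgx : g' x = ⊤ := if_pos hx
      rw [hgx, top_add, ENNReal.mul_top (by simp [hxy])]
      exact le_top
    have hH' : ∀ x y : X, ENNReal.ofReal |u x - u y| ≤
        ENNReal.ofReal (dist x y) * (g' x + g' y) := by
      intro x y
      rcases eq_or_ne x y with rfl | hxy
      · simp
      by_cases hx : x ∈ N'
      · exact htop x y hx hxy
      by_cases hy : y ∈ N'
      · rw [abs_sub_comm, dist_comm, add_comm]
        exact htop y x hy hxy.symm
      · have h1 := hNineq x (fun hxN => hx (subset_toMeasurable μ N hxN))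
          y (fun hyN => hy (subset_toMeasurable μ N hyN))
        rw [Real.rpow_one] at h1
        have hgx : g' x = g x := if_neg hx
        have hgy : g' y = g y := if_neg hy
        rw [hgx, hgy]
        exact h1
    have hmem : (∫⁻ x in Ω, (fun x => 4 * g' x) x ^ p ∂μ) ∈ { t | ∃ u : X → ℝ,
        (∃ K : ℝ≥0, LipschitzWith K u) ∧ (∀ x ∈ F, 1 ≤ u x) ∧ (∀ x ∉ Ω, u x = 0) ∧
        ∃ g : X → ℝ≥0∞, IsPWeakUpperGradient μ p u g ∧ t = ∫⁻ x in Ω, g x ^ p ∂μ } :=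
      ⟨u, ⟨κ.toNNReal, huL⟩, hu1, hu0, fun x => 4 * g' x,
        hmain2 u κ.toNNReal g' huL hg'm hH', rfl⟩
    have h1 : pCapacity μ p F Ω ≤ ∫⁻ x in Ω, (4 * g' x) ^ p ∂μ := sInf_le hmem
    have h4fin : (4 : ℝ≥0∞) ^ p ≠ ⊤ :=
      ENNReal.rpow_ne_top_of_nonneg hp0.le (by norm_num)
    have h2 : (∫⁻ x in Ω, (4 * g' x) ^ p ∂μ)
        = (4 : ℝ≥0∞) ^ p * ∫⁻ x in Ω, g' x ^ p ∂μ := by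
      rw [← lintegral_const_mul' _ _ h4fin]
      congr 1
      funext x
      rw [ENNReal.mul_rpow_of_nonneg _ _ hp0.le]
    have h3 : (∫⁻ x in Ω, g' x ^ p ∂μ) = ∫⁻ x in Ω, g x ^ p ∂μ := by
      refine lintegral_congr_ae (ae_restrict_of_ae ?_)
      have hae : ∀ᵐ x ∂μ, g' x = g x := by
        refine measure_mono_null ?_ hN'0
        intro x hx
        by_contra hxN
        exact hx (if_neg hxN)
      filter_upwards [hae] with x hx
      rw [hx]
    have h4 : (4 : ℝ≥0∞) ^ p = ENNReal.ofReal (4 ^ p) := by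
      rw [← ENNReal.ofReal_rpow_of_pos (by norm_num : (0:ℝ) < 4)]
      norm_num
    calc pCapacity μ p F Ω ≤ ∫⁻ x in Ω, (4 * g' x) ^ p ∂μ := h1
      _ = (4 : ℝ≥0∞) ^ p * ∫⁻ x in Ω, g' x ^ p ∂μ := h2
      _ = ENNReal.ofReal (4 ^ p) * ∫⁻ x in Ω, g x ^ p ∂μ := by rw [h3, h4]
      _ ≤ ENNReal.ofReal (4 ^ p) * ∫⁻ x, g x ^ p ∂μ :=
          mul_le_mul_right (setLIntegral_le_lintegral _ _) _
  have hdiv : pCapacity μ p F Ω / ENNReal.ofReal (4 ^ p) ≤ hajlaszCapacity μ 1 p F Ω := by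
    refine le_sInf fun τ hτ => ?_
    rw [ENNReal.div_le_iff hc0 hcT, mul_comm]
    exact main τ hτ
  rw [ENNReal.div_le_iff hc0 hcT] at hdiv
  rw [mul_comm] at hdiv
  exact hdiv
end

section
/- Let 1 < p < q < ∞ and let X = ℝ with Euclidean distance and the measure dμ = w dx where w(x) = dist(x, {1,−1})^{q−1}. Then the variational p-capacity of the closed ball [−1,1] relative to (−2,2) is zero: cap_p([−1,1], (−2,2)) = 0, as witnessed by the test functions u_ρ(x) = max{0, 1 − dist(x,[−1,1])/ρ} whose energy ∫ |u_ρ'|^p w dx ≤ (2/q) ρ^{q−p} → 0 as ρ → 0. -/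
open MeasureTheory Metric Set ENNReal NNReal

private lemma volume_image_le_lip1 {f : ℝ → ℝ} (hf : LipschitzWith 1 f)
    (s : Set ℝ) : volume (f '' s) ≤ volume s := by
  have := hf.hausdorffMeasure_image_le (d := 1) zero_le_one s
  simpa [MeasureTheory.hausdorffMeasure_real] using this

private lemma lip_profile (r : ℝ) : LipschitzWith 1 (fun y : ℝ => min (max (|y| - 1) 0) r) := by
  refine ((LipschitzWith.of_dist_le_mul fun x y => ?_).max_const 0).min_const r
  simp only [Real.dist_eq, one_mul, sub_sub_sub_cancel_right, NNReal.coe_one]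
  exact abs_abs_sub_abs_le_abs_sub x y

private lemma cap_le (p q r : ℝ) (hp : 1 < p) (hpq : p < q) (hr : 0 < r) (hr1 : r ≤ 1) :
    pCapacity
      ((volume : Measure ℝ).withDensity
        (fun x => ENNReal.ofReal (min |x - 1| |x + 1| ^ (q - 1))))
      p (Icc (-1 : ℝ) 1) (Ioo (-2 : ℝ) 2) ≤ ENNReal.ofReal (2 * r ^ (q - p)) := by
  have hp0 : (0 : ℝ) < p := lt_trans one_pos hp
  set w : ℝ → ℝ≥0∞ := fun x => ENNReal.ofReal (min |x - 1| |x + 1| ^ (q - 1)) with hw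
  set C : Set ℝ := {x : ℝ | 1 ≤ |x|} ∩ {x : ℝ | |x| ≤ 1 + r} with hC
  have hCmeas : MeasurableSet C :=
    (measurableSet_le measurable_const measurable_abs).inter
      (measurableSet_le measurable_abs measurable_const)
  set g : ℝ → ℝ≥0∞ := C.indicator (fun _ => ENNReal.ofReal (1 / r)) with hg
  set u : ℝ → ℝ := fun x => 1 - min (max (|x| - 1) 0) r / r with hu
  have hgmeas : Measurable g := Measurable.indicator measurable_const hCmeas
  -- u is Lipschitz
  have hulip : LipschitzWith ⟨1 / r, by positivity⟩ u := by
    refine LipschitzWith.of_dist_le_mul fun x y => ?_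
    have h1 := (lip_profile r).dist_le_mul x y
    simp only [Real.dist_eq, NNReal.coe_one, one_mul, NNReal.coe_mk] at h1 ⊢
    have : (1 - min (max (|x| - 1) 0) r / r) - (1 - min (max (|y| - 1) 0) r / r)
        = (min (max (|y| - 1) 0) r - min (max (|x| - 1) 0) r) / r := by ring
    change _ ≤ (1 / r) * |x - y|
    rw [hu]
    rw [this, abs_div, abs_of_pos hr, abs_sub_comm, div_eq_mul_inv, one_div, mul_comm]
    exact mul_le_mul_of_nonneg_left h1 (by positivity)
  -- boundary conditions
  have hF : ∀ x ∈ Icc (-1 : ℝ) 1, 1 ≤ u x := by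
    intro x hx
    have hax : |x| ≤ 1 := abs_le.mpr ⟨hx.1, hx.2⟩
    have : max (|x| - 1) 0 = 0 := max_eq_right (by linarith)
    simp [hu, this, min_eq_left hr.le]
  have hΩ : ∀ x ∉ Ioo (-2 : ℝ) 2, u x = 0 := by
    intro x hx
    have hax : 2 ≤ |x| := by
      rcases not_and_or.mp (fun hc => hx (Set.mem_Ioo.mpr hc)) with h | h
      · rw [le_abs]; right; linarith [not_lt.mp h]
      · rw [le_abs]; left; linarith [not_lt.mp h]
    have : min (max (|x| - 1) 0) r = r := min_eq_right (le_max_of_le_left (by linarith))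
    simp [hu, this, div_self hr.ne']
  -- the upper gradient property
  have hug : IsPWeakUpperGradient
      ((volume : Measure ℝ).withDensity w) p u g := by
    refine ⟨hgmeas, fun _ => 0, measurable_const, fun x => ⟨1, one_pos, ?_⟩, ?_⟩
    · simp [ENNReal.zero_rpow_of_pos hp0]
    · intro γ L hL hγ _
      set h : ℝ → ℝ := fun t => min (max (|γ t| - 1) 0) r with hh
      have hhl : LipschitzWith 1 h := by
        have := (lip_profile r).comp hγ
        rw [mul_one] at this
        exact this
      have hb0 : ∀ t, 0 ≤ h t := fun t => le_min (le_max_right _ _) hr.le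
      have hbr : ∀ t, h t ≤ r := fun t => min_le_right _ _
      set A : Set ℝ := Icc 0 L ∩ h ⁻¹' (Ioo 0 r) with hA
      -- IVT
      have hivt : Ioo (min (h 0) (h L)) (max (h 0) (h L)) ⊆ h '' A := by
        intro y hy
        have hy0r : y ∈ Ioo 0 r :=
          ⟨lt_of_le_of_lt (le_min (hb0 0) (hb0 L)) hy.1,
           lt_of_lt_of_le hy.2 (max_le (hbr 0) (hbr L))⟩
        have hyu : y ∈ Set.uIcc (h 0) (h L) := by
          rw [Set.uIcc]; exact Set.Ioo_subset_Icc_self hy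
        obtain ⟨t, ht, hty⟩ := intermediate_value_uIcc (hhl.continuous.continuousOn) hyu
        rw [Set.uIcc_of_le hL.le] at ht
        exact ⟨t, ⟨ht, by rw [Set.mem_preimage, hty]; exact hy0r⟩, hty⟩
      have key : ENNReal.ofReal |h L - h 0| ≤ volume A := by
        calc ENNReal.ofReal |h L - h 0|
            = volume (Ioo (min (h 0) (h L)) (max (h 0) (h L))) := by
              rw [Real.volume_Ioo, max_sub_min_eq_abs]
          _ ≤ volume (h '' A) := measure_mono hivt
          _ ≤ volume A := volume_image_le_lip1 hhl A
      have hAsub : A ⊆ γ ⁻¹' C ∩ Icc 0 L := by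
        rintro t ⟨htI, ht⟩
        simp only [Set.mem_preimage, Set.mem_Ioo] at ht
        have h1 : 0 < max (|γ t| - 1) 0 := lt_min_iff.mp ht.1 |>.1
        have h2 : 0 < |γ t| - 1 := by
          rcases lt_max_iff.mp h1 with h | h
          · exact h
          · exact absurd h (lt_irrefl 0)
        have h3 : |γ t| - 1 < r := by
          have h4 : min (max (|γ t| - 1) 0) r < r := ht.2
          have hmx : max (|γ t| - 1) 0 = |γ t| - 1 := max_eq_left h2.le
          rw [hmx] at h4
          rcases min_lt_iff.mp h4 with h | h
          · exact h
          · exact absurd h (lt_irrefl r)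
        refine ⟨⟨?_, ?_⟩, htI⟩
        · show (1 : ℝ) ≤ |γ t|; linarith
        · show |γ t| ≤ 1 + r; linarith
      -- compute the curve integral of g
      have hcurve : curveLintegral g γ L
          = ENNReal.ofReal (1 / r) * volume (γ ⁻¹' C ∩ Icc 0 L) := by
        have hpre : MeasurableSet (γ ⁻¹' C) := hCmeas.preimage hγ.continuous.measurable
        have : (fun t => g (γ t)) = (γ ⁻¹' C).indicator (fun _ => ENNReal.ofReal (1 / r)) := by
          funext t
          by_cases hmem : γ t ∈ C <;>
            simp [hg, Set.indicator_apply, Set.mem_preimage, hmem]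
        rw [curveLintegral, this, lintegral_indicator_const hpre,
          Measure.restrict_apply hpre]
      -- put the pieces together
      have huv : |u (γ 0) - u (γ L)| = |h L - h 0| / r := by
        have : u (γ 0) - u (γ L) = (h L - h 0) / r := by
          simp only [hu, hh]; ring
        rw [this, abs_div, abs_of_pos hr]
      calc ENNReal.ofReal |u (γ 0) - u (γ L)|
          = ENNReal.ofReal |h L - h 0| * ENNReal.ofReal (1 / r) := by
            rw [huv, div_eq_mul_inv, ← one_div, ENNReal.ofReal_mul (abs_nonneg _)]
        _ ≤ volume A * ENNReal.ofReal (1 / r) :=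
            mul_le_mul_left key _
        _ ≤ volume (γ ⁻¹' C ∩ Icc 0 L) * ENNReal.ofReal (1 / r) :=
            mul_le_mul_left (measure_mono hAsub) _
        _ = curveLintegral g γ L := by rw [hcurve, mul_comm]
  -- membership and the energy bound
  have hwmeas : Measurable w := by
    apply (ENNReal.continuous_ofReal.comp ?_).measurable
    exact ((continuous_id.sub continuous_const).abs.min
      (continuous_id.add continuous_const).abs).rpow_const fun x => Or.inr (by linarith)
  have hgp : Measurable fun x => g x ^ p := hgmeas.pow_const _
  have hmem : (∫⁻ x in Ioo (-2 : ℝ) 2, g x ^ p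
        ∂((volume : Measure ℝ).withDensity w)) ∈
      { t | ∃ u : ℝ → ℝ, (∃ K : ℝ≥0, LipschitzWith K u) ∧
        (∀ x ∈ Icc (-1 : ℝ) 1, 1 ≤ u x) ∧ (∀ x ∉ Ioo (-2 : ℝ) 2, u x = 0) ∧
        ∃ g' : ℝ → ℝ≥0∞, IsPWeakUpperGradient ((volume : Measure ℝ).withDensity w) p u g' ∧
          _ = ∫⁻ x in Ioo (-2 : ℝ) 2, g' x ^ p ∂((volume : Measure ℝ).withDensity w) } :=
    ⟨u, ⟨_, hulip⟩, hF, hΩ, g, hug, rfl⟩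
  refine le_trans (sInf_le hmem) ?_
  -- energy bound
  have heq : (∫⁻ x in Ioo (-2 : ℝ) 2, g x ^ p ∂((volume : Measure ℝ).withDensity w))
      = ∫⁻ x in Ioo (-2 : ℝ) 2, w x * g x ^ p := by
    rw [restrict_withDensity measurableSet_Ioo,
      lintegral_withDensity_eq_lintegral_mul _ hwmeas hgp]
    rfl
  rw [heq]
  set c : ℝ≥0∞ := ENNReal.ofReal (r ^ (q - 1)) * ENNReal.ofReal (1 / r) ^ p with hc
  have hpt : ∀ x : ℝ, w x * g x ^ p ≤ C.indicator (fun _ => c) x := by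
    intro x
    by_cases hx : x ∈ C
    · have hmin : min |x - 1| |x + 1| ≤ r := by
        obtain ⟨hx1, hx2⟩ := hx
        simp only [Set.mem_setOf_eq] at hx1 hx2
        rcases le_or_gt 0 x with hx0 | hx0
        · rw [abs_of_nonneg hx0] at hx1 hx2
          refine le_trans (min_le_left _ _) ?_
          rw [abs_of_nonneg (by linarith)]; linarith
        · rw [abs_of_neg hx0] at hx1 hx2
          refine le_trans (min_le_right _ _) ?_
          rw [abs_of_nonpos (by linarith)]; linarith
      have hwx : w x ≤ ENNReal.ofReal (r ^ (q - 1)) := by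
        apply ENNReal.ofReal_le_ofReal
        exact Real.rpow_le_rpow (le_min (abs_nonneg _) (abs_nonneg _)) hmin (by linarith)
      have hgx : g x = ENNReal.ofReal (1 / r) := by rw [hg, Set.indicator_of_mem hx]
      rw [Set.indicator_of_mem hx, hgx, hc]
      exact mul_le_mul_left hwx _
    · have hgx : g x = 0 := by rw [hg, Set.indicator_of_notMem hx]
      rw [hgx, ENNReal.zero_rpow_of_pos hp0, mul_zero, Set.indicator_of_notMem hx]
  have hCsub : C ⊆ Icc (-1 - r) (-1) ∪ Icc 1 (1 + r) := by
    rintro x ⟨hx1, hx2⟩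
    simp only [Set.mem_setOf_eq] at hx1 hx2
    rcases le_or_gt 0 x with hx0 | hx0
    · rw [abs_of_nonneg hx0] at hx1 hx2
      exact Or.inr ⟨hx1, hx2⟩
    · rw [abs_of_neg hx0] at hx1 hx2
      exact Or.inl ⟨by linarith, by linarith⟩
  have hvolC : volume C ≤ ENNReal.ofReal (2 * r) := by
    refine le_trans (measure_mono hCsub) (le_trans (measure_union_le _ _) ?_)
    rw [Real.volume_Icc, Real.volume_Icc, ← ENNReal.ofReal_add (by linarith) (by linarith)]
    apply ENNReal.ofReal_le_ofReal; ring_nf; linarith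
  calc ∫⁻ x in Ioo (-2 : ℝ) 2, w x * g x ^ p
      ≤ ∫⁻ x in Ioo (-2 : ℝ) 2, C.indicator (fun _ => c) x := lintegral_mono hpt
    _ = c * volume (C ∩ Ioo (-2 : ℝ) 2) := by
        rw [lintegral_indicator_const hCmeas, Measure.restrict_apply hCmeas]
    _ ≤ c * ENNReal.ofReal (2 * r) :=
        mul_le_mul_right (le_trans (measure_mono Set.inter_subset_left) hvolC) _
    _ = ENNReal.ofReal (2 * r ^ (q - p)) := by
        rw [hc, ENNReal.ofReal_rpow_of_pos (by positivity),
          ← ENNReal.ofReal_mul (by positivity), ← ENNReal.ofReal_mul (by positivity)]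
        congr 1
        rw [one_div, ← Real.rpow_neg_one r, ← Real.rpow_mul hr.le]
        have e : q - p = q - 1 + -1 * p + 1 := by ring
        rw [e, Real.rpow_add hr, Real.rpow_add hr, Real.rpow_one]
        ring
  
theorem stmt19 (p q : ℝ) (hp : 1 < p) (hpq : p < q) :
    pCapacity
      ((volume : Measure ℝ).withDensity
        (fun x => ENNReal.ofReal (min |x - 1| |x + 1| ^ (q - 1))))
      p (Icc (-1 : ℝ) 1) (Ioo (-2 : ℝ) 2) = 0 := by
  refine le_antisymm ?_ zero_le
  refine ENNReal.le_of_forall_pos_le_add fun ε hε _ => ?_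
  rw [zero_add]
  have hqp : (0 : ℝ) < q - p := by linarith
  set x : ℝ := ((ε : ℝ) / 2) ^ ((q - p)⁻¹) with hx
  have hx0 : 0 < x := Real.rpow_pos_of_pos (by positivity) _
  set r : ℝ := min 1 x with hrdef
  have hr0 : 0 < r := lt_min one_pos hx0
  have hr1 : r ≤ 1 := min_le_left _ _
  refine le_trans (cap_le p q r hp hpq hr0 hr1) ?_
  have hrx : r ^ (q - p) ≤ x ^ (q - p) :=
    Real.rpow_le_rpow hr0.le (min_le_right _ _) hqp.le
  have hxqp : x ^ (q - p) = (ε : ℝ) / 2 := by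
    rw [hx, ← Real.rpow_mul (by positivity), inv_mul_cancel₀ hqp.ne', Real.rpow_one]
  have : 2 * r ^ (q - p) ≤ (ε : ℝ) := by
    rw [hxqp] at hrx; linarith
  exact le_trans (ENNReal.ofReal_le_ofReal this) (by rw [ENNReal.ofReal_coe_nnreal])
end
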